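/- (Spitzer's identity, commutative case.) Let (A,Q) be a commutative Rota–Baxter ℚ-algebra of weight λ = −1, and extend Q coefficientwise to the operator P on the power series ring A[[x]], P(Σ a_n x^n) = Σ Q(a_n) x^n. Then for every a ∈ A, the element b = exp(−P(log(1 − ax))) of A[[x]] is a solution of the fixed point equation b = 1 + P(b a x); consequently exp(−P(log(1 − ax))) = Σ_{n≥0} x^n · P(P(P(⋯(P(a)a)⋯a)a)a) (the n-fold iterate), i.e. exp(−P(log(1−ax))) = Σ_{n≥0} (Qa)^{[n]} x^n, where (Qa)^{[0]} = 1 and (Qa)^{[n+1]} = Q((Qa)^{[n]} a). -/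

import Mathlib

/-- Coefficientwise extension of an operator `Q : A → A` to the power series ring `A[[x]]`:
`P(Σ aₙ xⁿ) = Σ Q(aₙ) xⁿ`. -/
noncomputable def coeffwise {A : Type*} [CommRing A] [Algebra ℚ A]
    (Q : A →ₗ[ℚ] A) (f : PowerSeries A) : PowerSeries A :=
  PowerSeries.mk fun n => Q (PowerSeries.coeff n f)

/-- The exponential `exp(f) = Σₙ fⁿ/n!` of a power series `f` (with zero constant term);
the `m`-th coefficient only involves the terms with `n ≤ m`. -/
noncomputable def expPS {A : Type*} [CommRing A] [Algebra ℚ A]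
    (f : PowerSeries A) : PowerSeries A :=
  PowerSeries.mk fun m =>
    PowerSeries.coeff m (∑ n ∈ Finset.range (m + 1), ((n.factorial : ℚ))⁻¹ • f ^ n)

/-- The logarithm `log(g) = -Σ_{n≥1} (1-g)ⁿ/n` of a power series `g` (with constant term `1`);
the `m`-th coefficient only involves the terms with `n ≤ m`. -/
noncomputable def logPS {A : Type*} [CommRing A] [Algebra ℚ A]
    (g : PowerSeries A) : PowerSeries A :=
  PowerSeries.mk fun m =>
    PowerSeries.coeff m (-∑ n ∈ Finset.range (m + 1), ((n : ℚ))⁻¹ • (1 - g) ^ n)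

/-- The iterates `(Qa)^{[0]} = 1`, `(Qa)^{[n+1]} = Q((Qa)^{[n]} a)`. -/
noncomputable def QaIter {A : Type*} [CommRing A] [Algebra ℚ A]
    (Q : A →ₗ[ℚ] A) (a : A) : ℕ → A
  | 0 => 1
  | n + 1 => Q (QaIter Q a n * a)

section SpitzerAux

open PowerSeries

variable {A : Type*} [CommRing A] [Algebra ℚ A] (Q : A →ₗ[ℚ] A)
  (hQ : ∀ u v : A, Q u * Q v = Q (u * Q v) + Q (Q u * v) - Q (u * v)) (a : A)

/-- Abbreviation for the series `g = -P(log(1-ax))`. -/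
noncomputable def spitzerG : PowerSeries A :=
  -(coeffwise Q (logPS (1 - PowerSeries.C a * PowerSeries.X)))

lemma coeff_logPS_aux (m : ℕ) :
    coeff m (logPS (1 - C a * X)) = -((m : ℚ)⁻¹ • a ^ m) := by
  have h1 : (1 : PowerSeries A) - (1 - C a * X) = C a * X := by ring
  simp only [logPS, coeff_mk, h1, map_neg, map_sum, neg_inj]
  have h2 : ∀ n : ℕ, coeff m (((n : ℚ))⁻¹ • (C a * X) ^ n)
      = if m = n then (m : ℚ)⁻¹ • a ^ m else 0 := by
    intro n
    rw [coeff_smul, mul_pow, ← map_pow, coeff_C_mul, coeff_X_pow]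
    split_ifs with h
    · subst h; simp
    · simp
  rw [Finset.sum_congr rfl fun n _ => h2 n, Finset.sum_ite_eq (Finset.range (m + 1)) m]
  simp

lemma coeff_spitzerG (m : ℕ) :
    coeff m (spitzerG Q a) = (m : ℚ)⁻¹ • Q (a ^ m) := by
  simp [spitzerG, coeffwise, coeff_logPS_aux, map_smul]

lemma constantCoeff_spitzerG : constantCoeff (spitzerG Q a) = 0 := by
  have := coeff_spitzerG Q a 0
  rw [coeff_zero_eq_constantCoeff] at this
  simpa using this

lemma coeff_deriv_spitzerG (i : ℕ) :
    coeff i (d⁄dX A (spitzerG Q a)) = Q (a ^ (i + 1)) := by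
  rw [coeff_derivative, coeff_spitzerG, smul_mul_assoc]
  have h1 : Q (a ^ (i + 1)) * ((i : A) + 1) = ((i + 1 : ℕ) : ℚ) • Q (a ^ (i + 1)) := by
    rw [Nat.cast_smul_eq_nsmul, nsmul_eq_mul, mul_comm]
    push_cast; ring
  rw [h1, smul_smul]
  push_cast
  rw [inv_mul_cancel₀ (by positivity), one_smul]

omit [Algebra ℚ A] in
lemma coeff_pow_eq_zero_aux {f : PowerSeries A} (hf : constantCoeff f = 0)
    {m n : ℕ} (h : m < n) : coeff m (f ^ n) = 0 := by
  have : (X : PowerSeries A) ^ n ∣ f ^ n :=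
    pow_dvd_pow_of_dvd (X_dvd_iff.mpr hf) n
  exact (X_pow_dvd_iff.mp this) m h

/-- Partial exponential sum. -/
noncomputable def partialExp (f : PowerSeries A) (N : ℕ) : PowerSeries A :=
  ∑ n ∈ Finset.range N, ((n.factorial : ℚ))⁻¹ • f ^ n

lemma coeff_partialExp {f : PowerSeries A} (hf : constantCoeff f = 0)
    {m N : ℕ} (h : m < N) :
    coeff m (partialExp f N) = coeff m (expPS f) := by
  have hsub : Finset.range (m + 1) ⊆ Finset.range N := Finset.range_subset_range.mpr h
  rw [expPS, coeff_mk, partialExp, map_sum, map_sum]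
  refine (Finset.sum_subset hsub fun n hn hn' => ?_).symm
  simp only [Finset.mem_range, not_lt] at hn'
  rw [coeff_smul, coeff_pow_eq_zero_aux hf hn', smul_zero]

lemma derivative_qsmul (q : ℚ) (f : PowerSeries A) :
    d⁄dX A (q • f) = q • d⁄dX A f := by
  ext n
  rw [coeff_derivative, coeff_smul, coeff_smul, coeff_derivative, smul_mul_assoc]

lemma derivative_partialExp (f : PowerSeries A) (N : ℕ) :
    d⁄dX A (partialExp f (N + 1)) = d⁄dX A f * partialExp f N := by
  induction N with
  | zero =>
      simp [partialExp]
  | succ N ih =>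
      have h1 : ((N + 1).factorial : ℚ)⁻¹ • ((N + 1) • (f ^ N • d⁄dX A f))
          = (N.factorial : ℚ)⁻¹ • (f ^ N * d⁄dX A f) := by
        rw [smul_comm, ← Nat.cast_smul_eq_nsmul ℚ, smul_smul, smul_eq_mul]
        congr 1
        rw [Nat.factorial_succ]
        have hN : ((N : ℚ) + 1) ≠ 0 := by positivity
        push_cast
        field_simp
      have h2 : partialExp f (N + 1 + 1) = partialExp f (N + 1)
          + ((N + 1).factorial : ℚ)⁻¹ • f ^ (N + 1) := by
        rw [partialExp, Finset.sum_range_succ, ← partialExp]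
      have h3 : partialExp f (N + 1) = partialExp f N
          + (N.factorial : ℚ)⁻¹ • f ^ N := by
        rw [partialExp, Finset.sum_range_succ, ← partialExp]
      rw [h2, map_add, ih, derivative_qsmul, Derivation.leibniz_pow]
      simp only [Nat.add_sub_cancel, h1]
      rw [h3, mul_add, mul_smul_comm, mul_comm (f ^ N)]

lemma expPS_rec {f : PowerSeries A} (hf : constantCoeff f = 0) (m : ℕ) :
    coeff (m + 1) (expPS f) * ((m : A) + 1)
      = ∑ i ∈ Finset.range (m + 1), coeff i (d⁄dX A f) * coeff (m - i) (expPS f) := by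
  have h1 : coeff m (d⁄dX A (partialExp f (m + 2)))
      = coeff (m + 1) (expPS f) * ((m : A) + 1) := by
    rw [coeff_derivative, coeff_partialExp hf (by omega)]
  rw [← h1, derivative_partialExp, coeff_mul,
    Finset.Nat.sum_antidiagonal_eq_sum_range_succ_mk]
  refine Finset.sum_congr rfl fun i hi => ?_
  rw [coeff_partialExp hf (by simp only [Finset.mem_range] at hi; omega)]

lemma coeff_zero_expPS {f : PowerSeries A} :
    coeff 0 (expPS f) = 1 := by
  simp [expPS]

include hQ in
lemma qaIter_rec :
    ∀ n : ℕ, ∑ k ∈ Finset.range (n + 1), Q (a ^ (k + 1)) * QaIter Q a (n - k)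
      = (n + 1) • QaIter Q a (n + 1) := by
  intro n
  induction n with
  | zero => simp [QaIter]
  | succ n ih =>
      set r := QaIter Q a with hr
      set f : ℕ → A := fun k => Q (a ^ (k + 1) * r (n + 1 - k)) with hf
      have hstep : ∀ k ∈ Finset.range (n + 1),
          Q (a ^ (k + 1)) * r (n + 1 - k)
            = f k + Q ((Q (a ^ (k + 1)) * r (n - k)) * a) - f (k + 1) := by
        intro k hk
        simp only [Finset.mem_range] at hk
        have h1 : n + 1 - k = (n - k) + 1 := by omega
        have h2 : r ((n - k) + 1) = Q (r (n - k) * a) := rfl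
        have hfk : f k = Q (a ^ (k + 1) * Q (r (n - k) * a)) := by
          simp only [hf, h1, h2]
        have h3 : f (k + 1) = Q (a ^ (k + 1) * (r (n - k) * a)) := by
          simp only [hf]
          have h5 : n + 1 - (k + 1) = n - k := by omega
          rw [h5]
          congr 1
          ring
        rw [h1, h2, hQ, hfk, h3, mul_assoc]
      rw [Finset.sum_range_succ, Finset.sum_congr rfl hstep]
      have hT2 : ∑ k ∈ Finset.range (n + 1), Q ((Q (a ^ (k + 1)) * r (n - k)) * a)
          = (n + 1) • r (n + 2) := by
        rw [← map_sum, ← Finset.sum_mul, ih, smul_mul_assoc, map_nsmul]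
        rfl
      have htel : ∑ k ∈ Finset.range (n + 1),
            (f k + Q ((Q (a ^ (k + 1)) * r (n - k)) * a) - f (k + 1))
          = (n + 1) • r (n + 2) + (f 0 - f (n + 1)) := by
        rw [Finset.sum_sub_distrib, Finset.sum_add_distrib, hT2]
        have e1 := Finset.sum_range_succ f (n + 1)
        have e2 := Finset.sum_range_succ' f (n + 1)
        have e3 : ∑ k ∈ Finset.range (n + 1), f (k + 1)
            = ∑ k ∈ Finset.range (n + 1), f k + f (n + 1) - f 0 := by
          rw [← e1, e2]; abel
        rw [e3]; abel
      rw [htel]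
      have hf0 : f 0 = r (n + 2) := by
        show Q (a ^ 1 * r (n + 1)) = Q (r (n + 1) * a)
        rw [pow_one, mul_comm]
      have h4 : n + 1 - (n + 1) = 0 := Nat.sub_self _
      have hfn : f (n + 1) = Q (a ^ (n + 2)) := by
        simp only [hf, h4]
        show Q (a ^ (n + 2) * 1) = Q (a ^ (n + 2))
        rw [mul_one]
      have hr0 : r 0 = (1 : A) := rfl
      rw [hf0, hfn, h4, hr0, mul_one]
      show (n + 1) • r (n + 2) + (r (n + 2) - Q (a ^ (n + 2))) + Q (a ^ (n + 2))
          = ((n + 1) + 1) • r (n + 2)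
      rw [succ_nsmul, add_assoc, sub_add_cancel, succ_nsmul, succ_nsmul]

include hQ in
lemma coeff_expPS_spitzerG (n : ℕ) :
    coeff n (expPS (spitzerG Q a)) = QaIter Q a n := by
  induction n using Nat.strong_induction_on with
  | _ n ih =>
    match n with
    | 0 =>
        rw [show QaIter Q a 0 = (1 : A) from rfl]
        exact coeff_zero_expPS
    | m + 1 =>
        have hrec := expPS_rec (constantCoeff_spitzerG Q a) m
        have h2 : ∑ i ∈ Finset.range (m + 1),
              coeff i (d⁄dX A (spitzerG Q a)) * coeff (m - i) (expPS (spitzerG Q a))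
            = ∑ i ∈ Finset.range (m + 1), Q (a ^ (i + 1)) * QaIter Q a (m - i) := by
          refine Finset.sum_congr rfl fun i hi => ?_
          simp only [Finset.mem_range] at hi
          rw [coeff_deriv_spitzerG, ih (m - i) (by omega)]
        have key : ((m + 1 : ℕ) : ℚ) • coeff (m + 1) (expPS (spitzerG Q a))
            = ((m + 1 : ℕ) : ℚ) • QaIter Q a (m + 1) := by
          rw [Nat.cast_smul_eq_nsmul, Nat.cast_smul_eq_nsmul, nsmul_eq_mul, mul_comm]
          rw [show ((m + 1 : ℕ) : A) = ((m : A) + 1) by push_cast; ring]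
          rw [hrec, h2, qaIter_rec Q hQ a m]
        have hne : ((m + 1 : ℕ) : ℚ) ≠ 0 := by positivity
        calc coeff (m + 1) (expPS (spitzerG Q a))
            = ((m + 1 : ℕ) : ℚ)⁻¹ • (((m + 1 : ℕ) : ℚ) •
                coeff (m + 1) (expPS (spitzerG Q a))) := by
              rw [smul_smul, inv_mul_cancel₀ hne, one_smul]
          _ = ((m + 1 : ℕ) : ℚ)⁻¹ • (((m + 1 : ℕ) : ℚ) • QaIter Q a (m + 1)) := by rw [key]
          _ = QaIter Q a (m + 1) := by rw [smul_smul, inv_mul_cancel₀ hne, one_smul]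

end SpitzerAux

/-- Spitzer's identity, commutative case: for a commutative Rota–Baxter
`ℚ`-algebra `(A,Q)` of weight `-1`, with `P` the coefficientwise extension of `Q` to `A[[x]]`,
the element `b = exp(-P(log(1 - ax)))` solves `b = 1 + P(b a x)`; consequently
`exp(-P(log(1-ax))) = Σₙ (Qa)^{[n]} xⁿ`. -/
theorem spitzer_identity {A : Type*} [CommRing A] [Algebra ℚ A]
    (Q : A →ₗ[ℚ] A)
    (hQ : ∀ u v : A, Q u * Q v = Q (u * Q v) + Q (Q u * v) - Q (u * v)) (a : A) :
    expPS (-(coeffwise Q (logPS (1 - PowerSeries.C a * PowerSeries.X)))) =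
      1 + coeffwise Q
        (expPS (-(coeffwise Q (logPS (1 - PowerSeries.C a * PowerSeries.X)))) *
          PowerSeries.C a * PowerSeries.X) ∧
    ∀ n : ℕ,
      PowerSeries.coeff n
          (expPS (-(coeffwise Q (logPS (1 - PowerSeries.C a * PowerSeries.X))))) =
        QaIter Q a n := by
  open PowerSeries in
  have hGdef : -(coeffwise Q (logPS (1 - PowerSeries.C a * PowerSeries.X)))
      = spitzerG Q a := rfl
  rw [hGdef]
  have hco : ∀ n, PowerSeries.coeff n (expPS (spitzerG Q a)) = QaIter Q a n :=
    coeff_expPS_spitzerG Q hQ a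
  refine ⟨?_, hco⟩
  ext n
  match n with
  | 0 =>
      rw [hco 0, map_add]
      have : PowerSeries.coeff 0
          (coeffwise Q (expPS (spitzerG Q a) * PowerSeries.C a * PowerSeries.X)) = 0 := by
        rw [coeffwise, PowerSeries.coeff_mk, PowerSeries.coeff_zero_eq_constantCoeff,
          map_mul, PowerSeries.constantCoeff_X, mul_zero, map_zero]
      rw [this, add_zero]
      simp [QaIter]
  | m + 1 =>
      rw [hco (m + 1), map_add, coeffwise, PowerSeries.coeff_mk,
        mul_comm (expPS (spitzerG Q a) * PowerSeries.C a) PowerSeries.X,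
        PowerSeries.coeff_succ_X_mul, PowerSeries.coeff_mul_C, hco m]
      have h1 : PowerSeries.coeff (m + 1) (1 : PowerSeries A) = 0 := by
        rw [PowerSeries.coeff_one]
        simp
      rw [h1, zero_add]
      rfl
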